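/- arXiv:1711.10983 — 2 statements merged into one kernel-verified Lean document; each statement's English description precedes it below -/
import Mathlib

section
/- Let C be a collection for a discrete Morse-Bott function f on a finite abstract simplicial complex K, with C ≠ C^red. Then: (a) for every cell σ ∈ C that is upward noncritical w.r.t. C there is a unique cell w ∉ C with σ < w and f(σ) > f(w), and the resulting map σ ↦ w is injective on the set of upward noncritical cells of C; (b) for every cell σ ∈ C that is downward noncritical w.r.t. C there is a unique cell w ∉ C with w < σ and f(σ) < f(w), and the resulting map σ ↦ w is injective on the set of downward noncritical cells of C. -/
open Finset

noncomputable section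
open scoped Classical

/-- `σ` is a facet of `τ`: `σ ⊆ τ` and `dim σ = dim τ − 1`. -/
def Facet (σ τ : Finset ℕ) : Prop := σ ⊆ τ ∧ σ.card + 1 = τ.card

/-- A finite abstract simplicial complex: a finite family of nonempty finite sets
closed under taking nonempty subsets. -/
def IsComplex (K : Finset (Finset ℕ)) : Prop :=
  (∀ σ ∈ K, σ.Nonempty) ∧ ∀ σ ∈ K, ∀ ν, ν ⊆ σ → ν.Nonempty → ν ∈ K

/-- The closure of a set of cells: all nonempty subsets of its cells. -/
def closureOf (S : Finset (Finset ℕ)) : Finset (Finset ℕ) :=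
  S.biUnion fun σ => σ.powerset.filter fun ν => ν ≠ ∅

/-- The graph on `C` joining two cells whenever their closures intersect is connected. -/
def ConnectedOn (C : Finset (Finset ℕ)) : Prop :=
  ∀ a ∈ C, ∀ b ∈ C,
    Relation.ReflTransGen
      (fun x y => x ∈ C ∧ y ∈ C ∧ (closureOf {x} ∩ closureOf {y}).Nonempty) a b

/-- A nonempty set of cells of `K`, all with the same `f`-value, whose
closure-intersection graph is connected. -/
def IsPreCollection (K : Finset (Finset ℕ)) (f : Finset ℕ → ℝ) (C : Finset (Finset ℕ)) :
    Prop :=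
  C ⊆ K ∧ C.Nonempty ∧ (∀ σ ∈ C, ∀ τ ∈ C, f σ = f τ) ∧ ConnectedOn C

/-- A collection for `f`: a maximal constant-value connected set of cells. -/
def IsCollection (K : Finset (Finset ℕ)) (f : Finset ℕ → ℝ) (C : Finset (Finset ℕ)) :
    Prop :=
  IsPreCollection K f C ∧ ∀ C', IsPreCollection K f C' → C ⊆ C' → C' = C

/-- `#{τ ∉ C : σ < τ, f(τ) < f(σ)}`. -/
def UpCount (K : Finset (Finset ℕ)) (f : Finset ℕ → ℝ) (C : Finset (Finset ℕ))
    (σ : Finset ℕ) : ℕ :=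
  (K.filter fun τ => τ ∉ C ∧ Facet σ τ ∧ f τ < f σ).card

/-- `#{ν ∉ C : ν < σ, f(ν) > f(σ)}`. -/
def DownCount (K : Finset (Finset ℕ)) (f : Finset ℕ → ℝ) (C : Finset (Finset ℕ))
    (σ : Finset ℕ) : ℕ :=
  (K.filter fun ν => ν ∉ C ∧ Facet ν σ ∧ f σ < f ν).card

/-- A discrete Morse-Bott function on `K`. -/
def IsMorseBott (K : Finset (Finset ℕ)) (f : Finset ℕ → ℝ) : Prop :=
  ∀ C, IsCollection K f C → ∀ σ ∈ C, UpCount K f C σ ≤ 1 ∧ DownCount K f C σ ≤ 1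

/-- `σ` is upward noncritical w.r.t. `C`. -/
def UpNoncrit (K : Finset (Finset ℕ)) (f : Finset ℕ → ℝ) (C : Finset (Finset ℕ))
    (σ : Finset ℕ) : Prop :=
  ∃ w ∈ K, w ∉ C ∧ Facet σ w ∧ f w < f σ

/-- `σ` is downward noncritical w.r.t. `C`. -/
def DownNoncrit (K : Finset (Finset ℕ)) (f : Finset ℕ → ℝ) (C : Finset (Finset ℕ))
    (σ : Finset ℕ) : Prop :=
  ∃ w ∈ K, w ∉ C ∧ Facet w σ ∧ f σ < f w

/-- The reduced collection `C^red`: the cells of `C` that are neither upward nor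
downward noncritical w.r.t. `C`. -/
def reducedOf (K : Finset (Finset ℕ)) (f : Finset ℕ → ℝ) (C : Finset (Finset ℕ)) :
    Finset (Finset ℕ) :=
  C.filter fun σ => ¬ UpNoncrit K f C σ ∧ ¬ DownNoncrit K f C σ

/-- A noncritical pair: a two-element set `{σ, τ}` with `σ < τ` and `f σ ≥ f τ`. -/
def IsNoncritPair (f : Finset ℕ → ℝ) (S : Finset (Finset ℕ)) : Prop :=
  ∃ σ τ, Facet σ τ ∧ f τ ≤ f σ ∧ S = {σ, τ}

/-- A discrete Morse function in Forman's sense. -/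
def IsDiscreteMorse (K : Finset (Finset ℕ)) (g : Finset ℕ → ℝ) : Prop :=
  ∀ σ ∈ K, (K.filter fun τ => Facet σ τ ∧ g τ ≤ g σ).card ≤ 1 ∧
    (K.filter fun ν => Facet ν σ ∧ g σ ≤ g ν).card ≤ 1

/-- A critical cell of `g`. -/
def IsCritical (K : Finset (Finset ℕ)) (g : Finset ℕ → ℝ) (σ : Finset ℕ) : Prop :=
  σ ∈ K ∧ (K.filter fun τ => Facet σ τ ∧ g τ ≤ g σ).card = 0 ∧
    (K.filter fun ν => Facet ν σ ∧ g σ ≤ g ν).card = 0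

lemma exists_collection_mem (K : Finset (Finset ℕ)) (f : Finset ℕ → ℝ)
    {w : Finset ℕ} (hw : w ∈ K) : ∃ C', IsCollection K f C' ∧ w ∈ C' := by
  classical
  set S : Finset (Finset (Finset ℕ)) :=
    K.powerset.filter (fun D => IsPreCollection K f D ∧ w ∈ D) with hS
  have hsingle : ({w} : Finset (Finset ℕ)) ∈ S := by
    simp only [hS, Finset.mem_filter, Finset.mem_powerset]
    refine ⟨by simpa using hw, ⟨by simpa using hw, ⟨w, by simp⟩, ?_, ?_⟩, by simp⟩
    · intro σ hσ τ hτ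
      simp only [Finset.mem_singleton] at hσ hτ; subst hσ; subst hτ; rfl
    · intro a ha b hb
      simp only [Finset.mem_singleton] at ha hb; subst ha; subst hb
      exact Relation.ReflTransGen.refl
  obtain ⟨D, hD, hmax⟩ := S.exists_max_image Finset.card ⟨_, hsingle⟩
  simp only [hS, Finset.mem_filter, Finset.mem_powerset] at hD
  refine ⟨D, ⟨hD.2.1, ?_⟩, hD.2.2⟩
  intro C' hC' hsub
  have hC'S : C' ∈ S := by
    simp only [hS, Finset.mem_filter, Finset.mem_powerset]
    exact ⟨hC'.1, hC', hsub hD.2.2⟩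
  have := hmax C' hC'S
  exact (Finset.eq_of_subset_of_card_le hsub this).symm

/-- If `C ≠ C^red`, then every upward (resp. downward) noncritical cell `σ`
of `C` has a unique witness `w ∉ C` with `σ < w` and `f σ > f w` (resp. `w < σ` and
`f σ < f w`), and the assignment `σ ↦ w` is injective on the upward (resp. downward)
noncritical cells of `C`. -/
theorem statement3 (K : Finset (Finset ℕ)) (hK : IsComplex K) (f : Finset ℕ → ℝ)
    (hf : IsMorseBott K f) (C : Finset (Finset ℕ)) (hC : IsCollection K f C)
    (hne : C ≠ reducedOf K f C) :
    ((∀ σ ∈ C, UpNoncrit K f C σ →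
        ∃! w, w ∈ K ∧ w ∉ C ∧ Facet σ w ∧ f w < f σ) ∧
      ∀ σ₁ ∈ C, ∀ σ₂ ∈ C, UpNoncrit K f C σ₁ → UpNoncrit K f C σ₂ →
        ∀ w, (w ∈ K ∧ w ∉ C ∧ Facet σ₁ w ∧ f w < f σ₁) →
          (w ∈ K ∧ w ∉ C ∧ Facet σ₂ w ∧ f w < f σ₂) → σ₁ = σ₂) ∧
    ((∀ σ ∈ C, DownNoncrit K f C σ →
        ∃! w, w ∈ K ∧ w ∉ C ∧ Facet w σ ∧ f σ < f w) ∧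
      ∀ σ₁ ∈ C, ∀ σ₂ ∈ C, DownNoncrit K f C σ₁ → DownNoncrit K f C σ₂ →
        ∀ w, (w ∈ K ∧ w ∉ C ∧ Facet w σ₁ ∧ f σ₁ < f w) →
          (w ∈ K ∧ w ∉ C ∧ Facet w σ₂ ∧ f σ₂ < f w) → σ₁ = σ₂) := by
  classical
  have hCK : C ⊆ K := hC.1.1
  have hconst : ∀ σ ∈ C, ∀ τ ∈ C, f σ = f τ := hC.1.2.2.1
  refine ⟨⟨?_, ?_⟩, ?_, ?_⟩
  · -- up uniqueness
    intro σ hσ hup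
    obtain ⟨w, hwK, hwC, hfac, hfw⟩ := hup
    refine ⟨w, ⟨hwK, hwC, hfac, hfw⟩, ?_⟩
    intro w' ⟨hw'K, hw'C, hfac', hfw'⟩
    have hcard := (hf C hC σ hσ).1
    rw [UpCount, Finset.card_le_one] at hcard
    exact hcard _ (Finset.mem_filter.mpr ⟨hw'K, hw'C, hfac', hfw'⟩)
      _ (Finset.mem_filter.mpr ⟨hwK, hwC, hfac, hfw⟩)
  · -- up injectivity
    intro σ₁ hσ₁ σ₂ hσ₂ _ _ w ⟨hwK, hwC, hfac₁, hf₁⟩ ⟨_, _, hfac₂, hf₂⟩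
    by_contra hne12
    obtain ⟨C', hC', hwC'⟩ := exists_collection_mem K f hwK
    have hconst' := hC'.1.2.2.1
    have h₁ : σ₁ ∉ C' := fun h => absurd (hconst' _ h _ hwC') (ne_of_gt hf₁)
    have h₂ : σ₂ ∉ C' := fun h => absurd (hconst' _ h _ hwC') (ne_of_gt hf₂)
    have hcard := (hf C' hC' w hwC').2
    rw [DownCount, Finset.card_le_one] at hcard
    exact hne12 (hcard _ (Finset.mem_filter.mpr ⟨hCK hσ₁, h₁, hfac₁, hf₁⟩)
      _ (Finset.mem_filter.mpr ⟨hCK hσ₂, h₂, hfac₂, hf₂⟩))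
  · -- down uniqueness
    intro σ hσ hdn
    obtain ⟨w, hwK, hwC, hfac, hfw⟩ := hdn
    refine ⟨w, ⟨hwK, hwC, hfac, hfw⟩, ?_⟩
    intro w' ⟨hw'K, hw'C, hfac', hfw'⟩
    have hcard := (hf C hC σ hσ).2
    rw [DownCount, Finset.card_le_one] at hcard
    exact hcard _ (Finset.mem_filter.mpr ⟨hw'K, hw'C, hfac', hfw'⟩)
      _ (Finset.mem_filter.mpr ⟨hwK, hwC, hfac, hfw⟩)
  · -- down injectivity
    intro σ₁ hσ₁ σ₂ hσ₂ _ _ w ⟨hwK, hwC, hfac₁, hf₁⟩ ⟨_, _, hfac₂, hf₂⟩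
    by_contra hne12
    obtain ⟨C', hC', hwC'⟩ := exists_collection_mem K f hwK
    have hconst' := hC'.1.2.2.1
    have h₁ : σ₁ ∉ C' := fun h => absurd (hconst' _ h _ hwC') (ne_of_lt hf₁)
    have h₂ : σ₂ ∉ C' := fun h => absurd (hconst' _ h _ hwC') (ne_of_lt hf₂)
    have hcard := (hf C' hC' w hwC').1
    rw [UpCount, Finset.card_le_one] at hcard
    exact hne12 (hcard _ (Finset.mem_filter.mpr ⟨hCK hσ₁, h₁, hfac₁, hf₁⟩)
      _ (Finset.mem_filter.mpr ⟨hCK hσ₂, h₂, hfac₂, hf₂⟩))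
end
end

section
/- Let f be a discrete Morse-Bott function on a finite abstract simplicial complex K and let C^red be a reduced collection for f. Then the set (closure of C^red) ∖ C^red is a subcomplex of K, i.e., it is closed under taking nonempty subsets. -/
open Finset

noncomputable section
open scoped Classical

section Aux

lemma mem_closureOf_of {S : Finset (Finset ℕ)} {x σ : Finset ℕ} (hσ : σ ∈ S)
    (h : x ⊆ σ) (hne : x.Nonempty) : x ∈ closureOf S := by
  simp only [closureOf, Finset.mem_biUnion, Finset.mem_filter, Finset.mem_powerset]
  exact ⟨σ, hσ, h, Finset.nonempty_iff_ne_empty.mp hne⟩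

lemma exists_of_mem_closureOf {S : Finset (Finset ℕ)} {x : Finset ℕ}
    (h : x ∈ closureOf S) : ∃ σ ∈ S, x ⊆ σ ∧ x.Nonempty := by
  simp only [closureOf, Finset.mem_biUnion, Finset.mem_filter, Finset.mem_powerset] at h
  obtain ⟨σ, hσ, hx, hne⟩ := h
  exact ⟨σ, hσ, hx, Finset.nonempty_iff_ne_empty.mpr hne⟩

/-- Every cell of `K` lies in some collection. -/
lemma exists_collection (K : Finset (Finset ℕ)) (f : Finset ℕ → ℝ) {w : Finset ℕ}
    (hwK : w ∈ K) : ∃ C', IsCollection K f C' ∧ w ∈ C' := by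
  classical
  set P := K.powerset.filter (fun D => IsPreCollection K f D ∧ w ∈ D) with hP
  have hsingle : ({w} : Finset (Finset ℕ)) ∈ P := by
    refine Finset.mem_filter.mpr ⟨Finset.mem_powerset.mpr (by simpa using hwK), ?_,
      Finset.mem_singleton_self w⟩
    refine ⟨by simpa using hwK, ⟨w, Finset.mem_singleton_self w⟩, ?_, ?_⟩
    · intro a ha b hb
      rw [Finset.mem_singleton] at ha hb; subst ha; subst hb; rfl
    · intro a ha b hb
      rw [Finset.mem_singleton] at ha hb; subst ha; subst hb
      exact Relation.ReflTransGen.refl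
  obtain ⟨D, hDP, hmax⟩ := P.exists_max_image Finset.card ⟨_, hsingle⟩
  obtain ⟨hDpow, hDpre, hwD⟩ := Finset.mem_filter.mp hDP
  refine ⟨D, ⟨hDpre, ?_⟩, hwD⟩
  intro C'' hpre'' hsub
  have h'' : C'' ∈ P := Finset.mem_filter.mpr
    ⟨Finset.mem_powerset.mpr hpre''.1, hpre'', hsub hwD⟩
  exact (Finset.eq_of_subset_of_card_le hsub (hmax _ h'')).symm

lemma insert_precollection {K : Finset (Finset ℕ)} {f : Finset ℕ → ℝ}
    {C : Finset (Finset ℕ)} (hpre : IsPreCollection K f C) {u β : Finset ℕ}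
    (hu : u ∈ K) (hβ : β ∈ C) (hval : f u = f β) (hint : (u ∩ β).Nonempty) :
    IsPreCollection K f (insert u C) := by
  obtain ⟨x, hx⟩ := hint
  have hxu : x ∈ u := (Finset.mem_inter.mp hx).1
  have hxβ : x ∈ β := (Finset.mem_inter.mp hx).2
  have hclose : ((closureOf {u}) ∩ (closureOf {β})).Nonempty := by
    refine ⟨{x}, Finset.mem_inter.mpr ⟨?_, ?_⟩⟩
    · exact mem_closureOf_of (Finset.mem_singleton_self u)
        (Finset.singleton_subset_iff.mpr hxu) ⟨x, Finset.mem_singleton_self x⟩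
    · exact mem_closureOf_of (Finset.mem_singleton_self β)
        (Finset.singleton_subset_iff.mpr hxβ) ⟨x, Finset.mem_singleton_self x⟩
  refine ⟨Finset.insert_subset hu hpre.1, ⟨u, Finset.mem_insert_self _ _⟩, ?_, ?_⟩
  · intro a ha b hb
    rcases Finset.mem_insert.mp ha with ha' | ha' <;>
      rcases Finset.mem_insert.mp hb with hb' | hb'
    · rw [ha', hb']
    · rw [ha', hval]; exact hpre.2.2.1 β hβ b hb'
    · rw [hb']; exact (hpre.2.2.1 a ha' β hβ).trans hval.symm
    · exact hpre.2.2.1 a ha' b hb'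
  · -- connectivity
    intro a ha b hb
    set D := insert u C with hD
    have hmono : ∀ p q : Finset ℕ,
        (p ∈ C ∧ q ∈ C ∧ ((closureOf {p}) ∩ (closureOf {q})).Nonempty) →
        (p ∈ D ∧ q ∈ D ∧ ((closureOf {p}) ∩ (closureOf {q})).Nonempty) :=
      fun p q ⟨h1, h2, h3⟩ => ⟨Finset.mem_insert_of_mem h1, Finset.mem_insert_of_mem h2, h3⟩
    have hCconn : ∀ p ∈ C, Relation.ReflTransGen
        (fun x y => x ∈ D ∧ y ∈ D ∧ ((closureOf {x}) ∩ (closureOf {y})).Nonempty) β p :=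
      fun p hp => Relation.ReflTransGen.mono hmono _ _ (hpre.2.2.2 β hβ p hp)
    have hstep1 : Relation.ReflTransGen
        (fun x y => x ∈ D ∧ y ∈ D ∧ ((closureOf {x}) ∩ (closureOf {y})).Nonempty) u β :=
      Relation.ReflTransGen.single
        ⟨Finset.mem_insert_self _ _, Finset.mem_insert_of_mem hβ, hclose⟩
    have hstep2 : Relation.ReflTransGen
        (fun x y => x ∈ D ∧ y ∈ D ∧ ((closureOf {x}) ∩ (closureOf {y})).Nonempty) β u :=
      Relation.ReflTransGen.single
        ⟨Finset.mem_insert_of_mem hβ, Finset.mem_insert_self _ _,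
          by rwa [Finset.inter_comm] at hclose⟩
    have hsymm : Symmetric
        (fun x y => x ∈ D ∧ y ∈ D ∧ ((closureOf {x}) ∩ (closureOf {y})).Nonempty) :=
      fun x y ⟨h1, h2, h3⟩ => ⟨h2, h1, by rwa [Finset.inter_comm] at h3⟩
    have hsymmR : Symmetric (Relation.ReflTransGen
        (fun x y => x ∈ D ∧ y ∈ D ∧ ((closureOf {x}) ∩ (closureOf {y})).Nonempty)) :=
      fun a b h => (@Relation.ReflTransGen.stdSymm _ (fun x y => x ∈ D ∧ y ∈ D ∧
        ((closureOf {x}) ∩ (closureOf {y})).Nonempty) ⟨fun a b h => hsymm h⟩).symm a b h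
    rcases Finset.mem_insert.mp ha with ha' | ha' <;>
      rcases Finset.mem_insert.mp hb with hb' | hb'
    · rw [ha', hb']
    · rw [ha']; exact hstep1.trans (hCconn b hb')
    · rw [hb']; exact (hsymmR (hCconn a ha')).trans hstep2
    · exact (hsymmR (hCconn a ha')).trans (hCconn b hb')

/-- Maximality: a cell of `K` with the same value intersecting a cell of `C` lies in `C`. -/
lemma mem_of_shares {K : Finset (Finset ℕ)} {f : Finset ℕ → ℝ} {C : Finset (Finset ℕ)}
    (hC : IsCollection K f C) {u β : Finset ℕ} (hu : u ∈ K) (hβ : β ∈ C)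
    (hval : f u = f β) (hint : (u ∩ β).Nonempty) : u ∈ C := by
  have := hC.2 (insert u C) (insert_precollection hC.1 hu hβ hval hint)
    (Finset.subset_insert _ _)
  rw [← this]; exact Finset.mem_insert_self _ _

/-- Ascent: if `τ ∈ C^red`, no cell strictly below `τ` and outside `C` has larger value. -/
lemma asc {K : Finset (Finset ℕ)} (hK : IsComplex K) {f : Finset ℕ → ℝ}
    (hf : IsMorseBott K f) {C : Finset (Finset ℕ)} (hC : IsCollection K f C)
    {τ : Finset ℕ} (hτ : τ ∈ reducedOf K f C) :
    ∀ n (w : Finset ℕ), w ∈ K → w ⊆ τ → w.card + n + 1 = τ.card → w ∉ C →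
      ¬ (f τ < f w) := by
  have hτfil := Finset.mem_filter.mp hτ
  have hτC : τ ∈ C := hτfil.1
  have hτK : τ ∈ K := hC.1.1 hτC
  intro n
  induction n with
  | zero =>
    intro w hwK hwτ hcard hwC hlt
    exact hτfil.2.2 ⟨w, hwK, hwC, ⟨hwτ, by omega⟩, hlt⟩
  | succ n ih =>
    intro w hwK hwτ hcard hwC hlt
    obtain ⟨C', hC', hwC'⟩ := exists_collection K f hwK
    have hup : (K.filter fun t => t ∉ C' ∧ Facet w t ∧ f t < f w).card ≤ 1 :=
      (hf C' hC' w hwC').1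
    have hsd : 1 < (τ \ w).card := by
      rw [Finset.card_sdiff_of_subset hwτ]; omega
    obtain ⟨x, hx, y, hy, hxy⟩ := Finset.one_lt_card.mp hsd
    have hxτ : x ∈ τ := (Finset.mem_sdiff.mp hx).1
    have hxw : x ∉ w := (Finset.mem_sdiff.mp hx).2
    have hyτ : y ∈ τ := (Finset.mem_sdiff.mp hy).1
    have hyw : y ∉ w := (Finset.mem_sdiff.mp hy).2
    have hprops : ∀ z ∈ τ \ w, insert z w ∈ K ∧ Facet w (insert z w) ∧
        insert z w ⊆ τ ∧ (insert z w).card = w.card + 1 := by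
      intro z hz
      have hzτ : z ∈ τ := (Finset.mem_sdiff.mp hz).1
      have hzw : z ∉ w := (Finset.mem_sdiff.mp hz).2
      have hsub : insert z w ⊆ τ := Finset.insert_subset hzτ hwτ
      have hcardz : (insert z w).card = w.card + 1 := Finset.card_insert_of_notMem hzw
      exact ⟨hK.2 τ hτK _ hsub (Finset.insert_nonempty _ _),
        ⟨Finset.subset_insert _ _, hcardz.symm⟩, hsub, hcardz⟩
    -- at least one coface is "good"
    have hgood : ∃ z ∈ τ \ w, ¬ (insert z w ∉ C' ∧ f (insert z w) < f w) := by
      by_contra hbad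
      push_neg at hbad
      have hin : ∀ z ∈ τ \ w,
          insert z w ∈ K.filter fun t => t ∉ C' ∧ Facet w t ∧ f t < f w := by
        intro z hz
        obtain ⟨hzK, hzfac, _, _⟩ := hprops z hz
        exact Finset.mem_filter.mpr ⟨hzK, (hbad z hz).1, hzfac, (hbad z hz).2⟩
      have hne : insert x w ≠ insert y w := by
        intro h
        have : x ∈ insert y w := h ▸ Finset.mem_insert_self x w
        rcases Finset.mem_insert.mp this with h' | h'
        · exact hxy h'
        · exact hxw h'
      have : 1 < (K.filter fun t => t ∉ C' ∧ Facet w t ∧ f t < f w).card :=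
        Finset.one_lt_card.mpr ⟨_, hin x hx, _, hin y hy, hne⟩
      omega
    obtain ⟨z, hz, hgz⟩ := hgood
    obtain ⟨hzK, hzfac, hzsub, hzcard⟩ := hprops z hz
    set u := insert z w with hu
    have hfu : f w ≤ f u := by
      by_cases huC' : u ∈ C'
      · exact le_of_eq (hC'.1.2.2.1 w hwC' u huC')
      · rcases not_and_or.mp hgz with h | h
        · exact absurd huC' (by simpa using h)
        · exact not_lt.mp h
    have hltu : f τ < f u := lt_of_lt_of_le hlt hfu
    have huC : u ∉ C := fun h => absurd (hC.1.2.2.1 u h τ hτC) (by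
      intro heq; rw [heq] at hltu; exact lt_irrefl _ hltu)
    exact ih u hzK hzsub (by omega) huC hltu

/-- Descent: if `ν ∈ C^red`, no cell strictly above `ν` and outside `C` has smaller value. -/
lemma desc {K : Finset (Finset ℕ)} (hK : IsComplex K) {f : Finset ℕ → ℝ}
    (hf : IsMorseBott K f) {C : Finset (Finset ℕ)} (hC : IsCollection K f C)
    {ν : Finset ℕ} (hν : ν ∈ reducedOf K f C) :
    ∀ n (w : Finset ℕ), w ∈ K → ν ⊆ w → ν.card + n + 1 = w.card → w ∉ C →
      ¬ (f w < f ν) := by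
  have hνfil := Finset.mem_filter.mp hν
  have hνC : ν ∈ C := hνfil.1
  have hνK : ν ∈ K := hC.1.1 hνC
  have hνne : ν.Nonempty := hK.1 ν hνK
  intro n
  induction n with
  | zero =>
    intro w hwK hνw hcard hwC hlt
    exact hνfil.2.1 ⟨w, hwK, hwC, ⟨hνw, by omega⟩, hlt⟩
  | succ n ih =>
    intro w hwK hνw hcard hwC hlt
    obtain ⟨C', hC', hwC'⟩ := exists_collection K f hwK
    have hdown : (K.filter fun t => t ∉ C' ∧ Facet t w ∧ f w < f t).card ≤ 1 :=
      (hf C' hC' w hwC').2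
    have hsd : 1 < (w \ ν).card := by
      rw [Finset.card_sdiff_of_subset hνw]; omega
    obtain ⟨x, hx, y, hy, hxy⟩ := Finset.one_lt_card.mp hsd
    have hxw : x ∈ w := (Finset.mem_sdiff.mp hx).1
    have hxν : x ∉ ν := (Finset.mem_sdiff.mp hx).2
    have hyw : y ∈ w := (Finset.mem_sdiff.mp hy).1
    have hyν : y ∉ ν := (Finset.mem_sdiff.mp hy).2
    have hwcard : 1 ≤ w.card := by omega
    have hprops : ∀ z ∈ w \ ν, w.erase z ∈ K ∧ Facet (w.erase z) w ∧
        ν ⊆ w.erase z ∧ (w.erase z).card + 1 = w.card := by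
      intro z hz
      have hzw : z ∈ w := (Finset.mem_sdiff.mp hz).1
      have hzν : z ∉ ν := (Finset.mem_sdiff.mp hz).2
      have hsub : ν ⊆ w.erase z := Finset.subset_erase.mpr ⟨hνw, hzν⟩
      have hcardz : (w.erase z).card + 1 = w.card := by
        rw [Finset.card_erase_of_mem hzw]; omega
      exact ⟨hK.2 w hwK _ (Finset.erase_subset _ _) (hνne.mono hsub),
        ⟨Finset.erase_subset _ _, hcardz⟩, hsub, hcardz⟩
    have hgood : ∃ z ∈ w \ ν, ¬ (w.erase z ∉ C' ∧ f w < f (w.erase z)) := by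
      by_contra hbad
      push_neg at hbad
      have hin : ∀ z ∈ w \ ν,
          w.erase z ∈ K.filter fun t => t ∉ C' ∧ Facet t w ∧ f w < f t := by
        intro z hz
        obtain ⟨hzK, hzfac, _, _⟩ := hprops z hz
        exact Finset.mem_filter.mpr ⟨hzK, (hbad z hz).1, hzfac, (hbad z hz).2⟩
      have hne : w.erase x ≠ w.erase y := by
        intro h
        have : y ∈ w.erase x := Finset.mem_erase.mpr ⟨fun h' => hxy h'.symm, hyw⟩
        rw [h] at this
        exact Finset.notMem_erase y w this
      have : 1 < (K.filter fun t => t ∉ C' ∧ Facet t w ∧ f w < f t).card :=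
        Finset.one_lt_card.mpr ⟨_, hin x hx, _, hin y hy, hne⟩
      omega
    obtain ⟨z, hz, hgz⟩ := hgood
    obtain ⟨hzK, hzfac, hzsub, hzcard⟩ := hprops z hz
    set u := w.erase z with hu
    have hfu : f u ≤ f w := by
      by_cases huC' : u ∈ C'
      · exact le_of_eq (hC'.1.2.2.1 u huC' w hwC')
      · rcases not_and_or.mp hgz with h | h
        · exact absurd huC' (by simpa using h)
        · exact not_lt.mp h
    have hltu : f u < f ν := lt_of_le_of_lt hfu hlt
    have huC : u ∉ C := fun h => absurd (hC.1.2.2.1 u h ν hνC) (by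
      intro heq; rw [heq] at hltu; exact lt_irrefl _ hltu)
    exact ih u hzK hzsub (by omega) huC hltu

end Aux

/-- `closure(C^red) ∖ C^red` is a subcomplex, i.e. closed under taking
nonempty subsets. -/
theorem statement5 (K : Finset (Finset ℕ)) (hK : IsComplex K) (f : Finset ℕ → ℝ)
    (hf : IsMorseBott K f) (C : Finset (Finset ℕ)) (hC : IsCollection K f C) :
    ∀ σ ∈ closureOf (reducedOf K f C) \ reducedOf K f C,
      ∀ ν ⊆ σ, ν.Nonempty → ν ∈ closureOf (reducedOf K f C) \ reducedOf K f C := by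
  intro s hs v hvs hvne
  obtain ⟨hscl, hsred⟩ := Finset.mem_sdiff.mp hs
  obtain ⟨t, htred, hst, hsne⟩ := exists_of_mem_closureOf hscl
  have htC : t ∈ C := (Finset.mem_filter.mp htred).1
  have htK : t ∈ K := hC.1.1 htC
  refine Finset.mem_sdiff.mpr ⟨mem_closureOf_of htred (hvs.trans hst) hvne, ?_⟩
  -- suppose v ∈ C^red; derive s ∈ C^red, contradiction
  intro hvred
  have hvC : v ∈ C := (Finset.mem_filter.mp hvred).1
  have hvK : v ∈ K := hC.1.1 hvC
  have hsK : s ∈ K := hK.2 t htK s hst hsne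
  have hvt : f v = f t := hC.1.2.2.1 v hvC t htC
  -- step 1: s ∈ C
  have hsC : s ∈ C := by
    by_contra hsC
    have hsv : s ≠ v := fun h => hsC (h ▸ hvC)
    have hst' : s ≠ t := fun h => hsC (h ▸ htC)
    rcases lt_trichotomy (f s) (f v) with h | h | h
    · -- descent from v
      have hcard : v.card < s.card :=
        Finset.card_lt_card (Finset.ssubset_iff_subset_ne.mpr ⟨hvs, fun h => hsv h.symm⟩)
      exact desc hK hf hC hvred (s.card - v.card - 1) s hsK hvs (by omega) hsC h
    · exact hsC (mem_of_shares hC hsK hvC h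
        ⟨_, Finset.mem_inter.mpr ⟨hvs (hvne.choose_spec), hvne.choose_spec⟩⟩)
    · -- ascent to t
      have hcard : s.card < t.card :=
        Finset.card_lt_card (Finset.ssubset_iff_subset_ne.mpr ⟨hst, hst'⟩)
      have h' : f t < f s := hvt ▸ h
      exact asc hK hf hC htred (t.card - s.card - 1) s hsK hst (by omega) hsC h'
  have hsv' : f s = f v := hC.1.2.2.1 s hsC v hvC
  -- step 2: s is not upward noncritical
  have hup : ¬ UpNoncrit K f C s := by
    rintro ⟨w, hwK, hwC, ⟨hsw, hswc⟩, hlt⟩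
    have hvw : v ⊆ w := hvs.trans hsw
    have hcard : v.card < w.card := lt_of_le_of_lt (Finset.card_le_card hvs) (by omega)
    exact desc hK hf hC hvred (w.card - v.card - 1) w hwK hvw (by omega) hwC
      (hsv' ▸ hlt)
  -- step 3: s is not downward noncritical
  have hdown : ¬ DownNoncrit K f C s := by
    rintro ⟨w, hwK, hwC, ⟨hws, hwsc⟩, hlt⟩
    have hwt : w ⊆ t := hws.trans hst
    have hcard : w.card < t.card := lt_of_lt_of_le (by omega) (Finset.card_le_card hst)
    have hlt' : f t < f w := by
      have : f s = f t := hC.1.2.2.1 s hsC t htC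
      exact this ▸ hlt
    exact asc hK hf hC htred (t.card - w.card - 1) w hwK hwt (by omega) hwC hlt'
  exact hsred (Finset.mem_filter.mpr ⟨hsC, hup, hdown⟩)
end
end
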